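/- Let A ∈ ℝ^{m×n}, let k ≥ 1, and let P ∈ ℝ^{m×(k+1)} and Q ∈ ℝ^{n×(k+1)} have orthonormal columns and satisfy PᵀA = (PᵀAQ)Qᵀ. Set B̄ := PᵀAQ ∈ ℝ^{(k+1)×(k+1)}. If C̄ ∈ ℝ^{(k+1)×(k+1)} is a best rank-k approximation of B̄ in spectral norm (i.e., rank C̄ ≤ k and ‖B̄ − C̄‖ ≤ ‖B̄ − D‖ for every D ∈ ℝ^{(k+1)×(k+1)} with rank D ≤ k), then ‖A − P C̄ Qᵀ‖ ≤ σ_{k+1}(A) + ‖(I_m − PPᵀ)A‖. -/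
import Mathlib


open Matrix

/-- Spectral norm (largest singular value) of a real matrix. -/
noncomputable def specNorm {a b : ℕ} (M : Matrix (Fin a) (Fin b) ℝ) : ℝ :=
  ‖LinearMap.toContinuousLinearMap (Matrix.toEuclideanLin M)‖

/-- The `j`-th largest singular value of a real matrix (`j ≥ 1`), characterized via the
Eckart–Young theorem as the minimal spectral-norm distance to matrices of rank `< j`;
it is `0` when `j` exceeds the smaller dimension. -/
noncomputable def singVal {a b : ℕ} (M : Matrix (Fin a) (Fin b) ℝ) (j : ℕ) : ℝ :=
  sInf {r : ℝ | ∃ D : Matrix (Fin a) (Fin b) ℝ, D.rank < j ∧ r = specNorm (M - D)}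

/-- The matrix of the first `k` columns of `M`. -/
def colSub {a b : ℕ} (M : Matrix (Fin a) (Fin b) ℝ) (k : ℕ) (hk : k ≤ b) :
    Matrix (Fin a) (Fin k) ℝ :=
  M.submatrix id fun j => ⟨j.1, lt_of_lt_of_le j.2 hk⟩

/-- The leading `r × c` submatrix of `M`. -/
def subUL {a b : ℕ} (M : Matrix (Fin a) (Fin b) ℝ) (r c : ℕ) (hr : r ≤ a) (hc : c ≤ b) :
    Matrix (Fin r) (Fin c) ℝ :=
  M.submatrix (fun i => ⟨i.1, lt_of_lt_of_le i.2 hr⟩) (fun j => ⟨j.1, lt_of_lt_of_le j.2 hc⟩)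

open scoped Matrix.Norms.L2Operator

lemma specNorm_eq_norm {a b : ℕ} (M : Matrix (Fin a) (Fin b) ℝ) : specNorm M = ‖M‖ := rfl

lemma norm_one_matrix (d : ℕ) (hd : 0 < d) : ‖(1 : Matrix (Fin d) (Fin d) ℝ)‖ = 1 := by
  have h := Matrix.l2_opNorm_conjTranspose_mul_self (1 : Matrix (Fin d) (Fin d) ℝ)
  simp only [Matrix.conjTranspose_one, mul_one] at h
  have hne : (1 : Matrix (Fin d) (Fin d) ℝ) ≠ 0 := by
    intro h0
    have := congrFun (congrFun h0 ⟨0, hd⟩) ⟨0, hd⟩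
    simp [Matrix.one_apply] at this
  have hpos : ‖(1 : Matrix (Fin d) (Fin d) ℝ)‖ ≠ 0 := norm_ne_zero_iff.mpr hne
  have := mul_left_cancel₀ hpos (by rw [mul_one]; exact h.symm :
    ‖(1 : Matrix (Fin d) (Fin d) ℝ)‖ * ‖(1 : Matrix (Fin d) (Fin d) ℝ)‖
      = ‖(1 : Matrix (Fin d) (Fin d) ℝ)‖ * 1)
  exact this

lemma norm_orthin {a d : ℕ} (hd : 0 < d) (P : Matrix (Fin a) (Fin d) ℝ)
    (hP : Pᵀ * P = 1) : ‖P‖ = 1 := by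
  have h := Matrix.l2_opNorm_conjTranspose_mul_self P
  rw [Matrix.conjTranspose_eq_transpose_of_trivial, hP, norm_one_matrix d hd] at h
  nlinarith [norm_nonneg P]

/-- if `P, Q` have orthonormal columns, `PᵀA = (PᵀAQ)Qᵀ`, and `C̄` is a best
rank-`k` spectral-norm approximation of `B̄ = PᵀAQ`, then
`‖A - P C̄ Qᵀ‖ ≤ σ_{k+1}(A) + ‖(I - PPᵀ)A‖`. -/
theorem truncated_projected_approx_error_le_sigma_A
    (m n k : ℕ) (hk : 1 ≤ k)
    (A : Matrix (Fin m) (Fin n) ℝ)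
    (P : Matrix (Fin m) (Fin (k + 1)) ℝ) (hP : Pᵀ * P = 1)
    (Q : Matrix (Fin n) (Fin (k + 1)) ℝ) (hQ : Qᵀ * Q = 1)
    (hPA : Pᵀ * A = (Pᵀ * A * Q) * Qᵀ)
    (C : Matrix (Fin (k + 1)) (Fin (k + 1)) ℝ) (hCrank : C.rank ≤ k)
    (hCbest : ∀ D : Matrix (Fin (k + 1)) (Fin (k + 1)) ℝ, D.rank ≤ k →
      specNorm (Pᵀ * A * Q - C) ≤ specNorm (Pᵀ * A * Q - D)) :
    specNorm (A - P * C * Qᵀ) ≤ singVal A (k + 1) + specNorm ((1 - P * Pᵀ) * A) := by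
  have hd : 0 < k + 1 := Nat.succ_pos k
  have hPn : ‖P‖ = 1 := norm_orthin hd P hP
  have hQn : ‖Q‖ = 1 := norm_orthin hd Q hQ
  have hPtn : ‖Pᵀ‖ = 1 := by
    rw [← Matrix.conjTranspose_eq_transpose_of_trivial, Matrix.l2_opNorm_conjTranspose, hPn]
  have hQtn : ‖Qᵀ‖ = 1 := by
    rw [← Matrix.conjTranspose_eq_transpose_of_trivial, Matrix.l2_opNorm_conjTranspose, hQn]
  -- the sandwich norm bound
  have sandwich : ∀ (X : Matrix (Fin m) (Fin n) ℝ), ‖Pᵀ * X * Q‖ ≤ ‖X‖ := by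
    intro X
    calc ‖Pᵀ * X * Q‖ ≤ ‖Pᵀ * X‖ * ‖Q‖ := Matrix.l2_opNorm_mul _ _
      _ ≤ ‖Pᵀ‖ * ‖X‖ * ‖Q‖ := by
          have := Matrix.l2_opNorm_mul Pᵀ X
          nlinarith [norm_nonneg Q]
      _ = ‖X‖ := by rw [hPtn, hQn]; ring
  -- key bound: ‖B̄ - C‖ ≤ singVal A (k+1)
  have hkey : ‖Pᵀ * A * Q - C‖ ≤ singVal A (k + 1) := by
    apply le_csInf
    · exact ⟨specNorm (A - 0), 0, by simpa using hd, rfl⟩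
    · rintro r ⟨D, hDrank, rfl⟩
      rw [specNorm_eq_norm]
      have hr : (Pᵀ * D * Q).rank ≤ k := by
        calc (Pᵀ * D * Q).rank ≤ (Pᵀ * D).rank := Matrix.rank_mul_le_left _ _
          _ ≤ D.rank := Matrix.rank_mul_le_right _ _
          _ ≤ k := Nat.lt_succ_iff.mp hDrank
      have h1 := hCbest (Pᵀ * D * Q) hr
      rw [specNorm_eq_norm, specNorm_eq_norm] at h1
      have h2 : Pᵀ * A * Q - Pᵀ * D * Q = Pᵀ * (A - D) * Q := by
        rw [Matrix.mul_sub, Matrix.sub_mul]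
      rw [h2] at h1
      exact h1.trans (sandwich (A - D))
  -- decomposition
  have hdec : A - P * C * Qᵀ = (1 - P * Pᵀ) * A + P * (Pᵀ * A * Q - C) * Qᵀ := by
    have h3 : Pᵀ * A = Pᵀ * (A * (Q * Qᵀ)) := by simpa [Matrix.mul_assoc] using hPA
    simp only [Matrix.sub_mul, Matrix.mul_sub, Matrix.one_mul, Matrix.mul_assoc]
    rw [← h3]
    abel
  rw [specNorm_eq_norm, specNorm_eq_norm, hdec]
  calc ‖(1 - P * Pᵀ) * A + P * (Pᵀ * A * Q - C) * Qᵀ‖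
      ≤ ‖(1 - P * Pᵀ) * A‖ + ‖P * (Pᵀ * A * Q - C) * Qᵀ‖ := norm_add_le _ _
    _ ≤ ‖(1 - P * Pᵀ) * A‖ + ‖Pᵀ * A * Q - C‖ := by
        have h1 : ‖P * (Pᵀ * A * Q - C) * Qᵀ‖ ≤ ‖Pᵀ * A * Q - C‖ := by
          calc ‖P * (Pᵀ * A * Q - C) * Qᵀ‖ ≤ ‖P * (Pᵀ * A * Q - C)‖ * ‖Qᵀ‖ :=
                Matrix.l2_opNorm_mul _ _
            _ ≤ ‖P‖ * ‖Pᵀ * A * Q - C‖ * ‖Qᵀ‖ := by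
                have := Matrix.l2_opNorm_mul P (Pᵀ * A * Q - C)
                nlinarith [norm_nonneg Qᵀ]
            _ = ‖Pᵀ * A * Q - C‖ := by rw [hPn, hQtn]; ring
        linarith
    _ ≤ singVal A (k + 1) + ‖(1 - P * Pᵀ) * A‖ := by linarith
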